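/- arXiv:1911.12737 — 2 statements merged into one kernel-verified Lean document; each statement's English description precedes it below -/
import Mathlib

section
/- If locate succeeds, the new focal point starts with the given kind: for every LL(1) focused syntax (s, c) and kind k, if locate k (s, c) = some (s', c') then k ∈ First s'. -/
set_option autoImplicit false

/-- Context-free syntaxes (value-aware context-free expressions). -/
inductive Syn (Token Kind : Type) (Var : Type → Type) : Type → Type 1 where
  | elem (k : Kind) : Syn Token Kind Var Token
  | fail {A : Type} : Syn Token Kind Var A
  | eps {A : Type} (v : A) : Syn Token Kind Var A
  | disj {A : Type} (s₁ s₂ : Syn Token Kind Var A) : Syn Token Kind Var A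
  | seqn {A B : Type} (s₁ : Syn Token Kind Var A) (s₂ : Syn Token Kind Var B) :
      Syn Token Kind Var (A × B)
  | map {A B : Type} (f : A → B) (s : Syn Token Kind Var A) : Syn Token Kind Var B
  | var {A : Type} (x : Var A) : Syn Token Kind Var A

section

variable {Token Kind : Type} {Var : Type → Type}
variable (kd : Token → Kind) (env : ∀ A : Type, Var A → Syn Token Kind Var A)

/-- Semantics of syntaxes. -/
inductive Matches : ∀ {A : Type}, Syn Token Kind Var A → List Token → A → Prop where
  | elem {k : Kind} {t : Token} (h : kd t = k) : Matches (Syn.elem k) [t] t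
  | eps {A : Type} (v : A) : Matches (Syn.eps v) [] v
  | disjL {A : Type} {s₁ s₂ : Syn Token Kind Var A} {ts : List Token} {v : A} :
      Matches s₁ ts v → Matches (Syn.disj s₁ s₂) ts v
  | disjR {A : Type} {s₁ s₂ : Syn Token Kind Var A} {ts : List Token} {v : A} :
      Matches s₂ ts v → Matches (Syn.disj s₁ s₂) ts v
  | seqn {A B : Type} {s₁ : Syn Token Kind Var A} {s₂ : Syn Token Kind Var B}
      {ts₁ ts₂ : List Token} {v₁ : A} {v₂ : B} :
      Matches s₁ ts₁ v₁ → Matches s₂ ts₂ v₂ →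
      Matches (Syn.seqn s₁ s₂) (ts₁ ++ ts₂) (v₁, v₂)
  | map {A B : Type} (f : A → B) {s : Syn Token Kind Var A} {ts : List Token} {v : A} :
      Matches s ts v → Matches (Syn.map f s) ts (f v)
  | var {A : Type} (x : Var A) {ts : List Token} {v : A} :
      Matches (env A x) ts v → Matches (Syn.var x) ts v

/-- Productivity. -/
inductive Productive : ∀ {A : Type}, Syn Token Kind Var A → Prop where
  | eps {A : Type} (v : A) : Productive (Syn.eps v)
  | elem (k : Kind) : Productive (Syn.elem k)
  | disjL {A : Type} {s₁ s₂ : Syn Token Kind Var A} :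
      Productive s₁ → Productive (Syn.disj s₁ s₂)
  | disjR {A : Type} {s₁ s₂ : Syn Token Kind Var A} :
      Productive s₂ → Productive (Syn.disj s₁ s₂)
  | seqn {A B : Type} {s₁ : Syn Token Kind Var A} {s₂ : Syn Token Kind Var B} :
      Productive s₁ → Productive s₂ → Productive (Syn.seqn s₁ s₂)
  | map {A B : Type} (f : A → B) {s : Syn Token Kind Var A} :
      Productive s → Productive (Syn.map f s)
  | var {A : Type} (x : Var A) : Productive (env A x) → Productive (Syn.var x)

/-- Nullability, with associated value. -/
inductive Nullable : ∀ {A : Type}, Syn Token Kind Var A → A → Prop where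
  | eps {A : Type} (v : A) : Nullable (Syn.eps v) v
  | disjL {A : Type} {s₁ s₂ : Syn Token Kind Var A} {v : A} :
      Nullable s₁ v → Nullable (Syn.disj s₁ s₂) v
  | disjR {A : Type} {s₁ s₂ : Syn Token Kind Var A} {v : A} :
      Nullable s₂ v → Nullable (Syn.disj s₁ s₂) v
  | seqn {A B : Type} {s₁ : Syn Token Kind Var A} {s₂ : Syn Token Kind Var B} {v₁ : A} {v₂ : B} :
      Nullable s₁ v₁ → Nullable s₂ v₂ → Nullable (Syn.seqn s₁ s₂) (v₁, v₂)
  | map {A B : Type} (f : A → B) {s : Syn Token Kind Var A} {v : A} :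
      Nullable s v → Nullable (Syn.map f s) (f v)
  | var {A : Type} (x : Var A) {v : A} : Nullable (env A x) v → Nullable (Syn.var x) v

/-- First sets: `InFirst env k s` means `k ∈ First s`. -/
inductive InFirst : ∀ {A : Type}, Kind → Syn Token Kind Var A → Prop where
  | elem (k : Kind) : InFirst k (Syn.elem k)
  | disjL {A : Type} {k : Kind} {s₁ s₂ : Syn Token Kind Var A} :
      InFirst k s₁ → InFirst k (Syn.disj s₁ s₂)
  | disjR {A : Type} {k : Kind} {s₁ s₂ : Syn Token Kind Var A} :
      InFirst k s₂ → InFirst k (Syn.disj s₁ s₂)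
  | seqnL {A B : Type} {k : Kind} {s₁ : Syn Token Kind Var A} {s₂ : Syn Token Kind Var B} :
      InFirst k s₁ → Productive env s₂ → InFirst k (Syn.seqn s₁ s₂)
  | seqnR {A B : Type} {k : Kind} {s₁ : Syn Token Kind Var A} {s₂ : Syn Token Kind Var B}
      {v : A} : Nullable env s₁ v → InFirst k s₂ → InFirst k (Syn.seqn s₁ s₂)
  | map {A B : Type} {k : Kind} (f : A → B) {s : Syn Token Kind Var A} :
      InFirst k s → InFirst k (Syn.map f s)
  | var {A : Type} {k : Kind} (x : Var A) : InFirst k (env A x) → InFirst k (Syn.var x)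

/-- Should-not-follow sets: `InSNF env k s` means `k ∈ ShouldNotFollow s`. -/
inductive InSNF : ∀ {A : Type}, Kind → Syn Token Kind Var A → Prop where
  | disjL {A : Type} {k : Kind} {s₁ s₂ : Syn Token Kind Var A} :
      InSNF k s₁ → InSNF k (Syn.disj s₁ s₂)
  | disjR {A : Type} {k : Kind} {s₁ s₂ : Syn Token Kind Var A} :
      InSNF k s₂ → InSNF k (Syn.disj s₁ s₂)
  | disjFN {A : Type} {k : Kind} {s₁ s₂ : Syn Token Kind Var A} {v : A} :
      InFirst env k s₁ → Nullable env s₂ v → InSNF k (Syn.disj s₁ s₂)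
  | disjNF {A : Type} {k : Kind} {s₁ s₂ : Syn Token Kind Var A} {v : A} :
      Nullable env s₁ v → InFirst env k s₂ → InSNF k (Syn.disj s₁ s₂)
  | seqnL {A B : Type} {k : Kind} {s₁ : Syn Token Kind Var A} {s₂ : Syn Token Kind Var B}
      {v : B} : InSNF k s₁ → Nullable env s₂ v → InSNF k (Syn.seqn s₁ s₂)
  | seqnR {A B : Type} {k : Kind} {s₁ : Syn Token Kind Var A} {s₂ : Syn Token Kind Var B} :
      Productive env s₁ → InSNF k s₂ → InSNF k (Syn.seqn s₁ s₂)
  | map {A B : Type} {k : Kind} (f : A → B) {s : Syn Token Kind Var A} :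
      InSNF k s → InSNF k (Syn.map f s)
  | var {A : Type} {k : Kind} (x : Var A) : InSNF k (env A x) → InSNF k (Syn.var x)

/-- LL(1) conflicts. A syntax `s` is LL(1) iff `¬ HasConflict env s`. -/
inductive HasConflict : ∀ {A : Type}, Syn Token Kind Var A → Prop where
  | disjNN {A : Type} {s₁ s₂ : Syn Token Kind Var A} {v₁ v₂ : A} :
      Nullable env s₁ v₁ → Nullable env s₂ v₂ → HasConflict (Syn.disj s₁ s₂)
  | disjFF {A : Type} {s₁ s₂ : Syn Token Kind Var A} {k : Kind} :
      InFirst env k s₁ → InFirst env k s₂ → HasConflict (Syn.disj s₁ s₂)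
  | disjL {A : Type} {s₁ s₂ : Syn Token Kind Var A} :
      HasConflict s₁ → HasConflict (Syn.disj s₁ s₂)
  | disjR {A : Type} {s₁ s₂ : Syn Token Kind Var A} :
      HasConflict s₂ → HasConflict (Syn.disj s₁ s₂)
  | seqnSF {A B : Type} {s₁ : Syn Token Kind Var A} {s₂ : Syn Token Kind Var B} {k : Kind} :
      InSNF env k s₁ → InFirst env k s₂ → HasConflict (Syn.seqn s₁ s₂)
  | seqnL {A B : Type} {s₁ : Syn Token Kind Var A} {s₂ : Syn Token Kind Var B} :
      HasConflict s₁ → HasConflict (Syn.seqn s₁ s₂)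
  | seqnR {A B : Type} {s₁ : Syn Token Kind Var A} {s₂ : Syn Token Kind Var B} :
      HasConflict s₂ → HasConflict (Syn.seqn s₁ s₂)
  | map {A B : Type} (f : A → B) {s : Syn Token Kind Var A} :
      HasConflict s → HasConflict (Syn.map f s)
  | var {A : Type} (x : Var A) : HasConflict (env A x) → HasConflict (Syn.var x)

end

/-- Layers of a context, with above type `A` and below type `B`. -/
inductive Layer (Token Kind : Type) (Var : Type → Type) : Type → Type → Type 1 where
  | apply {A B : Type} (f : A → B) : Layer Token Kind Var A B
  | prepend {A C : Type} (v : C) : Layer Token Kind Var A (C × A)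
  | followBy {A C : Type} (s : Syn Token Kind Var C) : Layer Token Kind Var A (A × C)

/-- Type-aligned contexts (stacks of layers). -/
inductive Ctx (Token Kind : Type) (Var : Type → Type) : Type → Type → Type 1 where
  | nil {A : Type} : Ctx Token Kind Var A A
  | cons {A B C : Type} (l : Layer Token Kind Var A B) (c : Ctx Token Kind Var B C) :
      Ctx Token Kind Var A C

section

variable {Token Kind : Type} {Var : Type → Type}

def Ctx.isNil : ∀ {A B : Type}, Ctx Token Kind Var A B → Bool
  | _, _, Ctx.nil => true
  | _, _, Ctx.cons _ _ => false

/-- Unfocusing a focused syntax. -/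
def unfocus : ∀ {A B : Type}, Syn Token Kind Var A → Ctx Token Kind Var A B →
    Syn Token Kind Var B
  | _, _, s, Ctx.nil => s
  | _, _, s, Ctx.cons (Layer.apply f) c => unfocus (Syn.map f s) c
  | _, _, s, Ctx.cons (Layer.prepend v) c => unfocus (Syn.seqn (Syn.eps v) s) c
  | _, _, s, Ctx.cons (Layer.followBy s') c => unfocus (Syn.seqn s s') c

/-- Focused syntaxes with below type `B`. -/
def Focused (Token Kind : Type) (Var : Type → Type) (B : Type) : Type 1 :=
  (A : Type) × Syn Token Kind Var A × Ctx Token Kind Var A B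

def unfocusF {B : Type} (fs : Focused Token Kind Var B) : Syn Token Kind Var B :=
  unfocus fs.2.1 fs.2.2

def focusF {A : Type} (s : Syn Token Kind Var A) : Focused Token Kind Var A :=
  ⟨A, s, Ctx.nil⟩

/-- Plugging a value into a context. -/
def plug : ∀ {A B : Type}, A → Ctx Token Kind Var A B → Focused Token Kind Var B
  | A, _, v, Ctx.nil => ⟨A, Syn.eps v, Ctx.nil⟩
  | _, _, v, Ctx.cons (Layer.apply f) c => plug (f v) c
  | _, _, v, Ctx.cons (Layer.prepend v') c => plug (v', v) c
  | _, _, v, Ctx.cons (Layer.followBy s) c => ⟨_, s, Ctx.cons (Layer.prepend v) c⟩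

end

section

variable {Token Kind : Type} {Var : Type → Type}
variable (kd : Token → Kind) (env : ∀ A : Type, Var A → Syn Token Kind Var A)

/-- Weight of a context (followBy layers count double). -/
def ctxWt : ∀ {A B : Type}, Ctx Token Kind Var A B → Nat
  | _, _, Ctx.nil => 0
  | _, _, Ctx.cons (Layer.apply _) c => ctxWt c + 1
  | _, _, Ctx.cons (Layer.prepend _) c => ctxWt c + 1
  | _, _, Ctx.cons (Layer.followBy _) c => ctxWt c + 2

theorem ctxWt_plug : ∀ {A B : Type} (v : A) (c : Ctx Token Kind Var A B),
    ctxWt (plug v c).2.2 ≤ ctxWt c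
  | _, _, _, Ctx.nil => Nat.le_refl _
  | _, _, v, Ctx.cons (Layer.apply f) c =>
      Nat.le_trans (ctxWt_plug (f v) c) (Nat.le_succ _)
  | _, _, v, Ctx.cons (Layer.prepend v') c =>
      Nat.le_trans (ctxWt_plug (v', v) c) (Nat.le_succ _)
  | _, _, _, Ctx.cons (Layer.followBy _) c => Nat.le_succ (ctxWt c + 1)

theorem ctxWt_plug_lt : ∀ {A B C : Type} (v : A) (l : Layer Token Kind Var A B)
    (c : Ctx Token Kind Var B C),
    ctxWt (plug v (Ctx.cons l c)).2.2 < ctxWt (Ctx.cons l c)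
  | _, _, _, v, Layer.apply f, c => Nat.lt_succ_of_le (ctxWt_plug (f v) c)
  | _, _, _, v, Layer.prepend v', c => Nat.lt_succ_of_le (ctxWt_plug (v', v) c)
  | _, _, _, _, Layer.followBy _, c => Nat.lt_succ_of_le (Nat.le_refl (ctxWt c + 1))

theorem nullable_productive {A : Type} {s : Syn Token Kind Var A} {v : A}
    (h : Nullable env s v) : Productive env s := by
  induction h with
  | eps v => exact .eps v
  | disjL _ ih => exact .disjL ih
  | disjR _ ih => exact .disjR ih
  | seqn _ _ ih₁ ih₂ => exact .seqn ih₁ ih₂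
  | map f _ ih => exact .map f ih
  | var x _ ih => exact .var x ih

/-! Inversion lemmas for `seqn`, via shape motives (dependent elimination on the
product-typed index fails directly). -/

def NullShape : ∀ {C : Type}, Syn Token Kind Var C → C → Prop
  | _, Syn.seqn s₁ s₂, v =>
      ∃ v₁ v₂, v = (v₁, v₂) ∧ Nullable env s₁ v₁ ∧ Nullable env s₂ v₂
  | _, _, _ => True

theorem nullable_seqn_inv {A B : Type} {s₁ : Syn Token Kind Var A}
    {s₂ : Syn Token Kind Var B} {v : A × B}
    (h : Nullable env (Syn.seqn s₁ s₂) v) :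
    ∃ v₁ v₂, v = (v₁, v₂) ∧ Nullable env s₁ v₁ ∧ Nullable env s₂ v₂ := by
  have : ∀ {C : Type} {s : Syn Token Kind Var C} {u : C},
      Nullable env s u → NullShape env s u := by
    intro C s u hu
    cases hu with
    | seqn h₁ h₂ => exact ⟨_, _, rfl, h₁, h₂⟩
    | _ => first | trivial | exact trivial
  exact this h

def FirstShape : ∀ {C : Type}, Kind → Syn Token Kind Var C → Prop
  | _, k, Syn.seqn s₁ s₂ =>
      (InFirst env k s₁ ∧ Productive env s₂) ∨
      (∃ v, Nullable env s₁ v ∧ InFirst env k s₂)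
  | _, _, _ => True

theorem infirst_seqn_inv {A B : Type} {k : Kind} {s₁ : Syn Token Kind Var A}
    {s₂ : Syn Token Kind Var B}
    (h : InFirst env k (Syn.seqn s₁ s₂)) :
    (InFirst env k s₁ ∧ Productive env s₂) ∨
      (∃ v, Nullable env s₁ v ∧ InFirst env k s₂) := by
  have : ∀ {C : Type} {k' : Kind} {s : Syn Token Kind Var C},
      InFirst env k' s → FirstShape env k' s := by
    intro C k' s hs
    cases hs with
    | seqnL h₁ h₂ => exact Or.inl ⟨h₁, h₂⟩
    | seqnR h₁ h₂ => exact Or.inr ⟨_, h₁, h₂⟩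
    | _ => trivial
  exact this h

def SNFShape : ∀ {C : Type}, Kind → Syn Token Kind Var C → Prop
  | _, k, Syn.seqn s₁ s₂ =>
      (∃ v, InSNF env k s₁ ∧ Nullable env s₂ v) ∨
      (Productive env s₁ ∧ InSNF env k s₂)
  | _, _, _ => True

theorem insnf_seqn_inv {A B : Type} {k : Kind} {s₁ : Syn Token Kind Var A}
    {s₂ : Syn Token Kind Var B}
    (h : InSNF env k (Syn.seqn s₁ s₂)) :
    (∃ v, InSNF env k s₁ ∧ Nullable env s₂ v) ∨
      (Productive env s₁ ∧ InSNF env k s₂) := by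
  have : ∀ {C : Type} {k' : Kind} {s : Syn Token Kind Var C},
      InSNF env k' s → SNFShape env k' s := by
    intro C k' s hs
    cases hs with
    | seqnL h₁ h₂ => exact Or.inl ⟨_, h₁, h₂⟩
    | seqnR h₁ h₂ => exact Or.inr ⟨h₁, h₂⟩
    | _ => trivial
  exact this h

def ProdShape : ∀ {C : Type}, Syn Token Kind Var C → Prop
  | _, Syn.seqn s₁ s₂ => Productive env s₁ ∧ Productive env s₂
  | _, _ => True

theorem productive_seqn_inv {A B : Type} {s₁ : Syn Token Kind Var A}
    {s₂ : Syn Token Kind Var B}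
    (h : Productive env (Syn.seqn s₁ s₂)) :
    Productive env s₁ ∧ Productive env s₂ := by
  have : ∀ {C : Type} {s : Syn Token Kind Var C},
      Productive env s → ProdShape env s := by
    intro C s hs
    cases hs with
    | seqn h₁ h₂ => exact ⟨h₁, h₂⟩
    | _ => trivial
  exact this h

def ConfShape : ∀ {C : Type}, Syn Token Kind Var C → Prop
  | _, Syn.seqn s₁ s₂ =>
      (∃ k, InSNF env k s₁ ∧ InFirst env k s₂) ∨
      HasConflict env s₁ ∨ HasConflict env s₂
  | _, _ => True

theorem conflict_seqn_inv {A B : Type} {s₁ : Syn Token Kind Var A}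
    {s₂ : Syn Token Kind Var B}
    (h : HasConflict env (Syn.seqn s₁ s₂)) :
    (∃ k, InSNF env k s₁ ∧ InFirst env k s₂) ∨
      HasConflict env s₁ ∨ HasConflict env s₂ := by
  have : ∀ {C : Type} {s : Syn Token Kind Var C},
      HasConflict env s → ConfShape env s := by
    intro C s hs
    cases hs with
    | seqnSF h₁ h₂ => exact Or.inl ⟨_, h₁, h₂⟩
    | seqnL h₁ => exact Or.inr (Or.inl h₁)
    | seqnR h₁ => exact Or.inr (Or.inr h₁)
    | _ => trivial
  exact this h

/-- Simulation between syntaxes: all analyses are monotone. -/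
def Sim {A : Type} (t t' : Syn Token Kind Var A) : Prop :=
  (∀ v, Nullable env t v → Nullable env t' v) ∧
  (∀ k, InFirst env k t → InFirst env k t') ∧
  (∀ k, InSNF env k t → InSNF env k t') ∧
  (Productive env t → Productive env t') ∧
  (HasConflict env t → HasConflict env t')

theorem sim_map {A B : Type} (f : A → B) {t t' : Syn Token Kind Var A}
    (h : Sim env t t') : Sim env (Syn.map f t) (Syn.map f t') := by
  obtain ⟨hn, hf, hs, hp, hc⟩ := h
  refine ⟨?_, ?_, ?_, ?_, ?_⟩
  · intro v hv; cases hv with | map _ h₀ => exact .map f (hn _ h₀)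
  · intro k hk; cases hk with | map _ h₀ => exact .map f (hf _ h₀)
  · intro k hk; cases hk with | map _ h₀ => exact .map f (hs _ h₀)
  · intro hpd; cases hpd with | map _ h₀ => exact .map f (hp h₀)
  · intro hcf; cases hcf with | map _ h₀ => exact .map f (hc h₀)

theorem sim_seqnL {A B : Type} {t t' : Syn Token Kind Var A}
    (s : Syn Token Kind Var B) (h : Sim env t t') :
    Sim env (Syn.seqn t s) (Syn.seqn t' s) := by
  obtain ⟨hn, hf, hs, hp, hc⟩ := h
  refine ⟨?_, ?_, ?_, ?_, ?_⟩
  · intro v hv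
    obtain ⟨v₁, v₂, rfl, h₁, h₂⟩ := nullable_seqn_inv env hv
    exact .seqn (hn _ h₁) h₂
  · intro k hk
    rcases infirst_seqn_inv env hk with ⟨h₁, h₂⟩ | ⟨v, h₁, h₂⟩
    · exact .seqnL (hf _ h₁) h₂
    · exact .seqnR (hn _ h₁) h₂
  · intro k hk
    rcases insnf_seqn_inv env hk with ⟨v, h₁, h₂⟩ | ⟨h₁, h₂⟩
    · exact .seqnL (hs _ h₁) h₂
    · exact .seqnR (hp h₁) h₂
  · intro hpd
    obtain ⟨h₁, h₂⟩ := productive_seqn_inv env hpd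
    exact .seqn (hp h₁) h₂
  · intro hcf
    rcases conflict_seqn_inv env hcf with ⟨k, h₁, h₂⟩ | h₁ | h₁
    · exact .seqnSF (hs _ h₁) h₂
    · exact .seqnL (hc h₁)
    · exact .seqnR h₁

theorem sim_seqnR {A B : Type} (s : Syn Token Kind Var A)
    {t t' : Syn Token Kind Var B} (h : Sim env t t') :
    Sim env (Syn.seqn s t) (Syn.seqn s t') := by
  obtain ⟨hn, hf, hs, hp, hc⟩ := h
  refine ⟨?_, ?_, ?_, ?_, ?_⟩
  · intro v hv
    obtain ⟨v₁, v₂, rfl, h₁, h₂⟩ := nullable_seqn_inv env hv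
    exact .seqn h₁ (hn _ h₂)
  · intro k hk
    rcases infirst_seqn_inv env hk with ⟨h₁, h₂⟩ | ⟨v, h₁, h₂⟩
    · exact .seqnL h₁ (hp h₂)
    · exact .seqnR h₁ (hf _ h₂)
  · intro k hk
    rcases insnf_seqn_inv env hk with ⟨v, h₁, h₂⟩ | ⟨h₁, h₂⟩
    · exact .seqnL h₁ (hn _ h₂)
    · exact .seqnR h₁ (hs _ h₂)
  · intro hpd
    obtain ⟨h₁, h₂⟩ := productive_seqn_inv env hpd
    exact .seqn h₁ (hp h₂)
  · intro hcf
    rcases conflict_seqn_inv env hcf with ⟨k, h₁, h₂⟩ | h₁ | h₁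
    · exact .seqnSF h₁ (hf _ h₂)
    · exact .seqnL h₁
    · exact .seqnR (hc h₁)

theorem sim_base {A B : Type} {s : Syn Token Kind Var A} {v : A}
    (s' : Syn Token Kind Var B) (hn : Nullable env s v) :
    Sim env (Syn.seqn (Syn.eps v) s') (Syn.seqn s s') := by
  refine ⟨?_, ?_, ?_, ?_, ?_⟩
  · intro u hu
    obtain ⟨v₁, v₂, rfl, h₁, h₂⟩ := nullable_seqn_inv env hu
    cases h₁; exact .seqn hn h₂
  · intro k hk
    rcases infirst_seqn_inv env hk with ⟨h₁, h₂⟩ | ⟨u, h₁, h₂⟩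
    · cases h₁
    · exact .seqnR hn h₂
  · intro k hk
    rcases insnf_seqn_inv env hk with ⟨u, h₁, h₂⟩ | ⟨h₁, h₂⟩
    · cases h₁
    · exact .seqnR (nullable_productive env hn) h₂
  · intro hpd
    obtain ⟨h₁, h₂⟩ := productive_seqn_inv env hpd
    exact .seqn (nullable_productive env hn) h₂
  · intro hcf
    rcases conflict_seqn_inv env hcf with ⟨k, h₁, h₂⟩ | h₁ | h₁
    · cases h₁
    · cases h₁
    · exact .seqnR h₁

theorem sim_unfocus : ∀ {A B : Type} {t t' : Syn Token Kind Var A}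
    (c : Ctx Token Kind Var A B), Sim env t t' →
    Sim env (unfocus t c) (unfocus t' c)
  | _, _, _, _, Ctx.nil, h => h
  | _, _, _, _, Ctx.cons (Layer.apply f) c, h => sim_unfocus c (sim_map env f h)
  | _, _, _, _, Ctx.cons (Layer.prepend v) c, h =>
      sim_unfocus c (sim_seqnR env (Syn.eps v) h)
  | _, _, _, _, Ctx.cons (Layer.followBy s) c, h =>
      sim_unfocus c (sim_seqnL env s h)

theorem conflict_unfocus : ∀ {A B : Type} (t : Syn Token Kind Var A)
    (c : Ctx Token Kind Var A B), HasConflict env t →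
    HasConflict env (unfocus t c)
  | _, _, _, Ctx.nil, h => h
  | _, _, t, Ctx.cons (Layer.apply f) c, h => conflict_unfocus _ c (.map f h)
  | _, _, t, Ctx.cons (Layer.prepend v) c, h => conflict_unfocus _ c (.seqnR h)
  | _, _, t, Ctx.cons (Layer.followBy s) c, h => conflict_unfocus _ c (.seqnL h)

theorem conflict_plug : ∀ {A B : Type} (s : Syn Token Kind Var A) (v : A)
    (c : Ctx Token Kind Var A B), Nullable env s v →
    HasConflict env (unfocusF (plug v c)) → HasConflict env (unfocus s c)
  | _, _, _, _, Ctx.nil, _, h => nomatch h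
  | _, _, s, v, Ctx.cons (Layer.apply f) c, hn, h =>
      conflict_plug (Syn.map f s) (f v) c (.map f hn) h
  | _, _, s, v, Ctx.cons (Layer.prepend v') c, hn, h =>
      conflict_plug (Syn.seqn (Syn.eps v') s) (v', v) c (.seqn (.eps v') hn) h
  | _, _, s, v, Ctx.cons (Layer.followBy s') c, hn, h =>
      (sim_unfocus env c (sim_base env s' hn)).2.2.2.2 h

theorem locate_some_first
    (nullOpt : ∀ {A : Type}, Syn Token Kind Var A → Option A)
    (hnull : ∀ {A : Type} (s : Syn Token Kind Var A), ¬ HasConflict env s →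
      ∀ v : A, nullOpt s = some v ↔ Nullable env s v)
    (locate : ∀ {B : Type}, Kind → Focused Token Kind Var B →
      Option (Focused Token Kind Var B))
    (hlocate_first : ∀ {A B : Type} (k : Kind) (s : Syn Token Kind Var A)
      (c : Ctx Token Kind Var A B), InFirst env k s →
      locate k (⟨A, s, c⟩ : Focused Token Kind Var B) =
        some (⟨A, s, c⟩ : Focused Token Kind Var B))
    (hlocate_plug : ∀ {A B : Type} (k : Kind) (s : Syn Token Kind Var A)
      (c : Ctx Token Kind Var A B) (v : A),
      ¬ InFirst env k s → nullOpt s = some v → c.isNil = false →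
      locate k (⟨A, s, c⟩ : Focused Token Kind Var B) = locate k (plug v c))
    (hlocate_none₁ : ∀ {A B : Type} (k : Kind) (s : Syn Token Kind Var A)
      (c : Ctx Token Kind Var A B),
      ¬ InFirst env k s → nullOpt s = none →
      locate k (⟨A, s, c⟩ : Focused Token Kind Var B) = none)
    (hlocate_none₂ : ∀ {A : Type} (k : Kind) (s : Syn Token Kind Var A),
      ¬ InFirst env k s →
      locate k (⟨A, s, Ctx.nil⟩ : Focused Token Kind Var A) = none)
    {A B : Type} (s : Syn Token Kind Var A) (c : Ctx Token Kind Var A B) (k : Kind)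
    (hll1 : ¬ HasConflict env (unfocus s c)) (fs' : Focused Token Kind Var B)
    (h : locate k (⟨A, s, c⟩ : Focused Token Kind Var B) = some fs') :
    InFirst env k fs'.2.1 := by
  have H : ∀ (n : ℕ) (A' B' : Type) (s' : Syn Token Kind Var A')
      (c' : Ctx Token Kind Var A' B') (fs'' : Focused Token Kind Var B'),
      ctxWt c' ≤ n → ¬ HasConflict env (unfocus s' c') →
      locate k (⟨A', s', c'⟩ : Focused Token Kind Var B') = some fs'' →
      InFirst env k fs''.2.1 := by
    intro n
    induction n using Nat.strong_induction_on with
    | _ n ih =>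
      intro A' B' s' c' fs'' hwt hll h
      by_cases hfst : InFirst env k s'
      · rw [hlocate_first k s' c' hfst] at h
        injection h with h
        subst h
        exact hfst
      · cases hno : nullOpt s' with
        | none =>
          rw [hlocate_none₁ k s' c' hfst hno] at h
          exact absurd h (by simp)
        | some v =>
          cases c' with
          | nil =>
            rw [hlocate_none₂ k s' hfst] at h
            exact absurd h (by simp)
          | cons l c₂ =>
            have hnul : Nullable env s' v :=
              (hnull s' (fun hc => hll (conflict_unfocus env s' _ hc)) v).mp hno
            rw [hlocate_plug k s' (Ctx.cons l c₂) v hfst hno rfl] at h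
            have hll2 : ¬ HasConflict env
                (unfocus (plug v (Ctx.cons l c₂)).2.1 (plug v (Ctx.cons l c₂)).2.2) :=
              fun hc => hll (conflict_plug env s' v (Ctx.cons l c₂) hnul hc)
            exact ih (ctxWt (plug v (Ctx.cons l c₂)).2.2)
              (lt_of_lt_of_le (ctxWt_plug_lt v l c₂) hwt)
              _ _ _ _ fs'' (le_refl _) hll2 h
  exact H (ctxWt c) A B s c fs' (le_refl _) hll1 h

end
end

section
/- Once focused on an elem k node, derivation is trivial: for every context c : Context Token B, token t with kind t = k, token sequence ts and value v : B, Matches (unfocus (elem k, c)) (t :: ts) v if and only if Matches (unfocus (epsilon t, c)) ts v. -/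
set_option autoImplicit false

section

variable {Token Kind : Type} {Var : Type → Type}
variable (kd : Token → Kind) (env : ∀ A : Type, Var A → Syn Token Kind Var A)
/-- Inversion characterization of `Matches`. -/
def MatchesInv : ∀ {C : Type}, Syn Token Kind Var C → List Token → C → Prop
  | _, Syn.elem k, ls, w => ls = [w] ∧ kd w = k
  | _, Syn.fail, _, _ => False
  | _, Syn.eps v, ls, w => ls = [] ∧ w = v
  | _, Syn.disj s₁ s₂, ls, w => Matches kd env s₁ ls w ∨ Matches kd env s₂ ls w
  | _, Syn.seqn s₁ s₂, ls, w =>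
      ∃ ts₁ ts₂, ls = ts₁ ++ ts₂ ∧ Matches kd env s₁ ts₁ w.1 ∧ Matches kd env s₂ ts₂ w.2
  | _, Syn.map f s, ls, w => ∃ w0, Matches kd env s ls w0 ∧ f w0 = w
  | _, Syn.var x, ls, w => Matches kd env (env _ x) ls w

theorem matches_inv {C : Type} {s : Syn Token Kind Var C} {ls : List Token} {w : C}
    (h : Matches kd env s ls w) : MatchesInv kd env s ls w := by
  cases h <;> simp only [MatchesInv] <;> tauto

theorem unfocus_step {A B : Type} (t : Token) :
    ∀ (c : Ctx Token Kind Var A B) (s s' : Syn Token Kind Var A),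
    (∀ ls w, Matches kd env s (t :: ls) w ↔ Matches kd env s' ls w) →
    (∀ w, ¬ Matches kd env s [] w) →
    ∀ ts v, Matches kd env (unfocus s c) (t :: ts) v ↔ Matches kd env (unfocus s' c) ts v := by
  intro c
  induction c with
  | nil => intro s s' hiff _ ts v; exact hiff ts v
  | cons l c ih =>
    intro s s' hiff hne ts v
    cases l with
    | apply f =>
      refine ih _ _ ?_ ?_ ts v
      · intro ls w
        constructor
        · intro h
          obtain ⟨w0, h0, rfl⟩ := matches_inv kd env h
          exact Matches.map f ((hiff ls w0).mp h0)
        · intro h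
          obtain ⟨w0, h0, rfl⟩ := matches_inv kd env h
          exact Matches.map f ((hiff ls w0).mpr h0)
      · intro w h
        obtain ⟨w0, h0, rfl⟩ := matches_inv kd env h
        exact hne w0 h0
    | prepend v' =>
      refine ih _ _ ?_ ?_ ts v
      · intro ls w
        obtain ⟨w1, w2⟩ := w
        constructor
        · intro h
          obtain ⟨ts₁, ts₂, heq, h₁, h₂⟩ := matches_inv kd env h
          obtain ⟨rfl, rfl⟩ := matches_inv kd env h₁
          simp only [List.nil_append] at heq; subst heq
          exact (Matches.seqn (Matches.eps _) ((hiff ls w2).mp h₂) :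
            Matches kd env _ ([] ++ ls) (w1, w2))
        · intro h
          obtain ⟨ts₁, ts₂, heq, h₁, h₂⟩ := matches_inv kd env h
          obtain ⟨rfl, rfl⟩ := matches_inv kd env h₁
          simp only [List.nil_append] at heq; subst heq
          exact (Matches.seqn (Matches.eps _) ((hiff ls w2).mpr h₂) :
            Matches kd env _ ([] ++ (t :: ls)) (w1, w2))
      · intro w h
        obtain ⟨ts₁, ts₂, heq, h₁, h₂⟩ := matches_inv kd env h
        obtain ⟨rfl, rfl⟩ := matches_inv kd env h₁
        simp only [List.nil_append] at heq; subst heq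
        exact hne _ h₂
    | followBy s₂ =>
      refine ih _ _ ?_ ?_ ts v
      · intro ls w
        obtain ⟨w1, w2⟩ := w
        constructor
        · intro h
          obtain ⟨ts₁, ts₂, heq, h₁, h₂⟩ := matches_inv kd env h
          cases ts₁ with
          | nil => exact absurd h₁ (hne _)
          | cons a rs =>
            obtain ⟨rfl, rfl⟩ : t = a ∧ ls = rs ++ ts₂ := by simpa using heq
            exact Matches.seqn ((hiff rs w1).mp h₁) h₂
        · intro h
          obtain ⟨ts₁, ts₂, heq, h₁, h₂⟩ := matches_inv kd env h
          subst heq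
          exact (Matches.seqn ((hiff ts₁ w1).mpr h₁) h₂ :
            Matches kd env _ ((t :: ts₁) ++ ts₂) (w1, w2))
      · intro w h
        obtain ⟨ts₁, ts₂, heq, h₁, h₂⟩ := matches_inv kd env h
        obtain ⟨rfl, rfl⟩ := List.append_eq_nil_iff.mp heq.symm
        exact hne _ h₁

theorem elem_derivation_trivial
    {B : Type} (c : Ctx Token Kind Var Token B) (t : Token) (k : Kind) (hk : kd t = k)
    (ts : List Token) (v : B) :
    Matches kd env (unfocus (Syn.elem k) c) (t :: ts) v ↔
      Matches kd env (unfocus (Syn.eps t) c) ts v := by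
  refine unfocus_step kd env t c _ _ ?_ ?_ ts v
  · intro ls w
    constructor
    · intro h
      obtain ⟨heq, _⟩ := matches_inv kd env h
      obtain ⟨rfl, rfl⟩ : t = w ∧ ls = [] := by simpa using heq
      exact Matches.eps t
    · intro h
      obtain ⟨rfl, rfl⟩ := matches_inv kd env h
      exact Matches.elem hk
  · intro w h
    obtain ⟨heq, _⟩ := matches_inv kd env h
    simp at heq

end
end
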